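/- Let π ∈ S_n avoid 132. Then for every r, the number of elements of the right weak order interval [e, π] with Coxeter length r equals the number of elements of [e, π] with Coxeter length ℓ(π) - r (the interval is rank-symmetric). -/

import Mathlib

open Equiv

/-- The adjacent transposition `s i`, swapping positions `i` and `i+1` (0-indexed). -/
def simpleT {n : ℕ} (i : Fin n) : Equiv.Perm (Fin (n+1)) := Equiv.swap i.castSucc i.succ

/-- Coxeter length: minimal length of a word in adjacent transpositions. -/
noncomputable def len {n : ℕ} (σ : Equiv.Perm (Fin (n+1))) : ℕ :=
  sInf {k | ∃ l : List (Fin n), l.length = k ∧ (l.map simpleT).prod = σ}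

/-- The inversion set of `σ`: pairs of values `(σ i, σ j)` with `i < j` and `σ i > σ j`. -/
def invSet {m : ℕ} (σ : Equiv.Perm (Fin m)) : Set (Fin m × Fin m) :=
  {p | ∃ i j : Fin m, i < j ∧ σ j < σ i ∧ p = (σ i, σ j)}

/-- The right weak Bruhat order, characterized by containment of inversion sets. -/
def wle {m : ℕ} (σ π : Equiv.Perm (Fin m)) : Prop := invSet σ ⊆ invSet π

/-- `σ` contains the pattern 132. -/
def contains132 {m : ℕ} (σ : Equiv.Perm (Fin m)) : Prop :=
  ∃ i₁ i₂ i₃ : Fin m, i₁ < i₂ ∧ i₂ < i₃ ∧ σ i₁ < σ i₃ ∧ σ i₃ < σ i₂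



namespace RankSym
open List

/-- inversion pairs of a word -/
def linvp : List ℕ → List (ℕ × ℕ)
  | [] => []
  | x :: xs => ((xs.filter (fun y => y < x)).map (fun y => (x, y))) ++ linvp xs

def linv (l : List ℕ) : ℕ := (linvp l).length

@[simp] lemma linvp_nil : linvp [] = [] := rfl
lemma linvp_cons (x : ℕ) (xs : List ℕ) :
    linvp (x :: xs) = ((xs.filter (fun y => y < x)).map (fun y => (x, y))) ++ linvp xs := rfl

@[simp] lemma linv_nil : linv [] = 0 := rfl

lemma linv_cons (x : ℕ) (xs : List ℕ) :
    linv (x :: xs) = xs.countP (fun y => y < x) + linv xs := by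
  simp [linv, linvp_cons, List.countP_eq_length_filter]

lemma mem_linvp {l : List ℕ} {a b : ℕ} :
    (a, b) ∈ linvp l ↔ b < a ∧ [a, b] <+ l := by
  induction l with
  | nil => simp [linvp]
  | cons x xs ih =>
    simp only [linvp_cons, List.mem_append, List.mem_map, List.mem_filter, ih]
    constructor
    · rintro (⟨y, ⟨hy, hyx⟩, h⟩ | ⟨hba, hsub⟩)
      · obtain ⟨rfl, rfl⟩ : x = a ∧ y = b := by
          constructor <;> [exact congrArg Prod.fst h; exact congrArg Prod.snd h]
        refine ⟨by simpa using hyx, ?_⟩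
        exact (List.cons_sublist_cons).2 (List.singleton_sublist.2 hy)
      · exact ⟨hba, hsub.cons x⟩
    · rintro ⟨hba, hsub⟩
      rcases List.sublist_cons_iff.1 hsub with h | ⟨r, hr, hrs⟩
      · exact Or.inr ⟨hba, h⟩
      · have : r = [b] := by injection hr with h1 h2; exact h2.symm ▸ rfl
        subst this
        have hax : a = x := by injection hr
        subst hax
        exact Or.inl ⟨b, ⟨List.singleton_sublist.1 hrs, by simpa using hba⟩, rfl⟩

lemma mem_of_mem_linvp {l : List ℕ} {a b : ℕ} (h : (a, b) ∈ linvp l) :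
    a ∈ l ∧ b ∈ l := by
  rw [mem_linvp] at h
  exact ⟨h.2.subset (by simp), h.2.subset (by simp)⟩

lemma nodup_linvp {l : List ℕ} (hl : l.Nodup) : (linvp l).Nodup := by
  induction l with
  | nil => simp
  | cons x xs ih =>
    rw [linvp_cons]
    rcases List.nodup_cons.1 hl with ⟨hx, hxs⟩
    refine List.Nodup.append ?_ (ih hxs) ?_
    · exact ((hxs.filter _).map (fun a b h => by simpa using h))
    · intro q hq1 hq2
      obtain ⟨y, hy, rfl⟩ := List.mem_map.1 hq1
      obtain ⟨hmem, _⟩ := mem_of_mem_linvp hq2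
      exact hx hmem

lemma linv_le_of_subset {w l : List ℕ} (hw : w.Nodup) (h : linvp w ⊆ linvp l) :
    linv w ≤ linv l := by
  have h1 : (linvp w).toFinset.card = linv w := List.toFinset_card_of_nodup (nodup_linvp hw)
  calc linv w = (linvp w).toFinset.card := h1.symm
    _ ≤ (linvp l).toFinset.card := Finset.card_le_card (fun q hq => by
        simp only [List.mem_toFinset] at *; exact h hq)
    _ ≤ (linvp l).length := List.toFinset_card_le _

lemma pair_sublist_filter {p : ℕ → Bool} {l : List ℕ} {a b : ℕ} :
    [a, b] <+ l.filter p ↔ ([a, b] <+ l ∧ p a ∧ p b) := by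
  constructor
  · intro h
    refine ⟨h.trans (List.filter_sublist (l := l)), ?_, ?_⟩
    · exact (List.mem_filter.1 (h.subset (by simp))).2
    · exact (List.mem_filter.1 (h.subset (by simp))).2
  · rintro ⟨h, ha, hb⟩
    have heq : [a, b].filter p = [a, b] := by simp [ha, hb]
    have := h.filter p
    rwa [heq] at this

lemma mem_linvp_filter {p : ℕ → Bool} {l : List ℕ} {a b : ℕ} :
    (a, b) ∈ linvp (l.filter p) ↔ ((a, b) ∈ linvp l ∧ p a ∧ p b) := by
  simp only [mem_linvp, pair_sublist_filter]
  tauto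

lemma pair_sublist_append {l₁ l₂ : List ℕ} {a b : ℕ} (ha : a ∈ l₁) (hb : b ∈ l₂) :
    [a, b] <+ l₁ ++ l₂ :=
  (List.singleton_sublist.2 ha).append (List.singleton_sublist.2 hb)


/-- indicator -/
def ind (p : ℕ → Bool) (x : ℕ) : ℕ := if p x then 1 else 0

lemma linv_append_singleton (u : List ℕ) (v : ℕ) :
    linv (u ++ [v]) = linv u + u.countP (fun a => v < a) := by
  induction u with
  | nil => simp [linv, linvp]
  | cons x xs ih =>
    rw [List.cons_append, linv_cons, ih, linv_cons, List.countP_cons, List.countP_append]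
    simp only [List.countP_cons, List.countP_nil]
    by_cases h : v < x <;> by_cases h2 : x < v <;> simp [h, h2] <;> omega

lemma linv_split (p : ℕ → Bool) (w : List ℕ)
    (H : ∀ a ∈ w, ∀ b ∈ w, p a = true → p b = false → b < a) :
    linv w = linv (w.filter p) + linv (w.filter (fun x => !p x))
      + linv (w.map (ind p)) := by
  induction w with
  | nil => simp
  | cons x xs ih =>
    have H' : ∀ a ∈ xs, ∀ b ∈ xs, p a = true → p b = false → b < a := by
      intro a ha b hb; exact H a (by simp [ha]) b (by simp [hb])
    have hsplitcnt : xs.countP (fun y => y < x)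
        = (xs.filter p).countP (fun y => y < x) + (xs.filter (fun y => !p y)).countP (fun y => y < x) := by
      rw [← List.countP_append]
      exact (List.Perm.countP_eq _ (List.filter_append_perm p xs)).symm
    cases hx : p x with
    | true =>
      have hbot : (xs.filter (fun y => !p y)).countP (fun y => y < x) = (xs.filter (fun y => !p y)).length := by
        rw [List.countP_eq_length]
        intro a ha
        have h := List.mem_filter.1 ha
        exact decide_eq_true (H x (by simp) a (by simp [h.1]) hx (by simpa using h.2))
      have hmask : (xs.map (ind p)).countP (fun y => y < 1) = (xs.filter (fun y => !p y)).length := by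
        rw [List.countP_map, ← List.countP_eq_length_filter]
        apply List.countP_congr
        intro y _
        simp only [Function.comp, ind]
        by_cases h : p y <;> simp [h]
      rw [List.filter_cons_of_pos (by simp [hx]), List.filter_cons_of_neg (by simp [hx]),
        List.map_cons]
      have hindx : ind p x = 1 := by simp [ind, hx]
      rw [hindx, linv_cons, linv_cons, linv_cons, ih H']
      omega
    | false =>
      have htop0 : (xs.filter p).countP (fun y => y < x) = 0 := by
        rw [List.countP_eq_zero]
        intro a ha
        have h := List.mem_filter.1 ha
        have hlt : x < a := H a (by simp [h.1]) x (by simp) h.2 hx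
        simp only [decide_eq_true_eq]; omega
      have hmask : (xs.map (ind p)).countP (fun y => y < 0) = 0 := by
        rw [List.countP_eq_zero]; intro a _; simp
      rw [List.filter_cons_of_neg (by simp [hx]), List.filter_cons_of_pos (by simp [hx]),
        List.map_cons]
      have hindx : ind p x = 0 := by simp [ind, hx]
      rw [hindx, linv_cons, linv_cons, linv_cons, ih H']
      omega

/-- merge a 0/1 mask with a top list and a bottom list -/
def merge : List ℕ → List ℕ → List ℕ → List ℕ
  | [], _, _ => []
  | e :: ms, t, b =>
    if e = 0 then b.headI :: merge ms t b.tail else t.headI :: merge ms t.tail b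

@[simp] lemma merge_nil (t b : List ℕ) : merge [] t b = [] := rfl
lemma merge_cons (e : ℕ) (ms t b : List ℕ) :
    merge (e :: ms) t b =
      if e = 0 then b.headI :: merge ms t b.tail else t.headI :: merge ms t.tail b := rfl

lemma merge_split (p : ℕ → Bool) (w : List ℕ) :
    merge (w.map (ind p)) (w.filter p) (w.filter (fun x => !p x)) = w := by
  induction w with
  | nil => rfl
  | cons x xs ih =>
    cases hx : p x with
    | true =>
      rw [List.map_cons, List.filter_cons_of_pos (by simp [hx]),
        List.filter_cons_of_neg (by simp [hx])]
      have hindx : ind p x = 1 := by simp [ind, hx]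
      rw [hindx, merge_cons, if_neg (by simp)]
      simp [ih]
    | false =>
      rw [List.map_cons, List.filter_cons_of_neg (by simp [hx]),
        List.filter_cons_of_pos (by simp [hx])]
      have hindx : ind p x = 0 := by simp [ind, hx]
      rw [hindx, merge_cons, if_pos rfl]
      simp [ih]

lemma split_merge (p : ℕ → Bool) :
    ∀ (m t b : List ℕ), (∀ x ∈ t, p x = true) → (∀ y ∈ b, p y = false) →
    (∀ e ∈ m, e = 0 ∨ e = 1) →
    m.countP (fun e => e = 1) = t.length → m.countP (fun e => e = 0) = b.length →
    (merge m t b).filter p = t ∧ (merge m t b).filter (fun x => !p x) = b ∧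
      (merge m t b).map (ind p) = m ∧ merge m t b ~ t ++ b := by
  intro m
  induction m with
  | nil =>
    intro t b _ _ _ hc1 hc0
    simp only [List.countP_nil] at hc1 hc0
    rw [List.eq_nil_of_length_eq_zero hc1.symm, List.eq_nil_of_length_eq_zero hc0.symm]
    simp
  | cons e ms ih =>
    intro t b ht hb hbin hc1 hc0
    rcases hbin e (by simp) with rfl | rfl
    · -- head 0 : take from b
      rcases b with _ | ⟨y, b'⟩
      · simp [List.countP_cons] at hc0
      have hy : p y = false := hb y (by simp)
      have ihres := ih t b' ht (fun z hz => hb z (by simp [hz]))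
        (fun e he => hbin e (by simp [he]))
        (by simp only [List.countP_cons] at hc1; simpa using hc1)
        (by simp only [List.countP_cons] at hc0; simpa using hc0)
      rw [merge_cons, if_pos rfl]
      simp only [List.headI, List.tail]
      refine ⟨?_, ?_, ?_, ?_⟩
      · rw [List.filter_cons_of_neg (by simp [hy]), ihres.1]
      · rw [List.filter_cons_of_pos (by simp [hy]), ihres.2.1]
      · rw [List.map_cons, ihres.2.2.1]; simp [ind, hy]
      · exact (ihres.2.2.2.cons y).trans (List.perm_middle).symm
    · -- head 1 : take from t
      rcases t with _ | ⟨x, t'⟩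
      · simp [List.countP_cons] at hc1
      have hx : p x = true := ht x (by simp)
      have ihres := ih t' b (fun z hz => ht z (by simp [hz])) hb
        (fun e he => hbin e (by simp [he]))
        (by simp only [List.countP_cons] at hc1; simpa using hc1)
        (by simp only [List.countP_cons] at hc0; simpa using hc0)
      rw [merge_cons, if_neg (by simp)]
      simp only [List.headI, List.tail]
      refine ⟨?_, ?_, ?_, ?_⟩
      · rw [List.filter_cons_of_pos (by simp [hx]), ihres.1]
      · rw [List.filter_cons_of_neg (by simp [hx]), ihres.2.1]
      · rw [List.map_cons, ihres.2.2.1]; simp [ind, hx]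
      · exact ihres.2.2.2.cons x

lemma linv_binary_reverse (m : List ℕ) (hbin : ∀ e ∈ m, e = 0 ∨ e = 1) :
    linv m + linv m.reverse = m.countP (fun e => e = 1) * m.countP (fun e => e = 0) := by
  induction m with
  | nil => simp
  | cons x xs ih =>
    have hbin' : ∀ e ∈ xs, e = 0 ∨ e = 1 := fun e he => hbin e (by simp [he])
    have ihr := ih hbin'
    rw [List.reverse_cons, linv_cons, linv_append_singleton, List.countP_reverse,
      List.countP_cons, List.countP_cons]
    rcases hbin x (by simp) with rfl | rfl
    · have h1 : xs.countP (fun y => y < 0) = 0 := by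
        rw [List.countP_eq_zero]; intro a _; simp
      have h2 : xs.countP (fun a => 0 < a) = xs.countP (fun e => e = 1) := by
        apply List.countP_congr; intro y hy
        rcases hbin' y hy with rfl | rfl <;> simp
      rw [h1, h2]
      norm_num
      linarith [ihr]
    · have h1 : xs.countP (fun y => y < 1) = xs.countP (fun e => e = 0) := by
        apply List.countP_congr; intro y hy
        rcases hbin' y hy with rfl | rfl <;> simp
      have h2 : xs.countP (fun a => 1 < a) = 0 := by
        rw [List.countP_eq_zero]; intro a ha
        rcases hbin' a ha with rfl | rfl <;> simp
      rw [h1, h2]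
      norm_num
      linarith [ihr]

lemma linv_replicate_blocks (a b : ℕ) :
    linv (List.replicate a 1 ++ List.replicate b 0) = a * b := by
  induction a with
  | zero =>
    simp only [List.replicate, List.nil_append, Nat.zero_mul]
    induction b with
    | zero => simp
    | succ n ihn => rw [List.replicate_succ, linv_cons, ihn]; simp [List.countP_replicate]
  | succ n ihn =>
    rw [List.replicate_succ, List.cons_append, linv_cons, ihn]
    rw [List.countP_append, List.countP_replicate, List.countP_replicate]
    simp
    ring



def contains132L (l : List ℕ) : Prop := ∃ x y z : ℕ, x < y ∧ y < z ∧ [x, z, y] <+ l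

lemma contains132L_of_sublist {l l' : List ℕ} (h : l' <+ l) (hc : contains132L l') :
    contains132L l := by
  obtain ⟨x, y, z, h1, h2, h3⟩ := hc
  exact ⟨x, y, z, h1, h2, h3.trans h⟩

def lwleL (w l : List ℕ) : Prop := ∀ q ∈ linvp w, q ∈ linvp l

instance (w l : List ℕ) : Decidable (lwleL w l) := List.decidableBAll _ _

lemma lwleL_refl (l : List ℕ) : lwleL l l := fun _ h => h

noncomputable def carrier (l : List ℕ) : Finset (List ℕ) :=
  l.permutations.toFinset.filter (fun w => lwleL w l)

lemma mem_carrier {w l : List ℕ} : w ∈ carrier l ↔ (w ~ l ∧ lwleL w l) := by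
  simp [carrier, List.mem_permutations]

noncomputable def igf (l : List ℕ) : Polynomial ℕ :=
  ∑ w ∈ carrier l, Polynomial.X ^ linv w

lemma coeff_igf (l : List ℕ) (r : ℕ) :
    (igf l).coeff r = ((carrier l).filter (fun w => linv w = r)).card := by
  rw [igf, Polynomial.finset_sum_coeff]
  rw [Finset.card_filter]
  apply Finset.sum_congr rfl
  intro w _
  rw [Polynomial.coeff_X_pow]
  by_cases h : linv w = r
  · simp [h]
  · rw [if_neg (fun hh => h hh.symm), if_neg h]

lemma linv_le_of_mem_carrier {w l : List ℕ} (hl : l.Nodup) (hw : w ∈ carrier l) :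
    linv w ≤ linv l := by
  rw [mem_carrier] at hw
  exact linv_le_of_subset (hw.1.symm.nodup hl) hw.2

lemma natDegree_igf_le {l : List ℕ} (hl : l.Nodup) : (igf l).natDegree ≤ linv l := by
  refine (Polynomial.natDegree_sum_le _ _).trans ?_
  rw [Finset.fold_max_le]
  refine ⟨Nat.zero_le _, fun w hw => ?_⟩
  simp only [Function.comp, Polynomial.natDegree_X_pow]
  exact linv_le_of_mem_carrier hl hw

lemma reflect_finset_sum {ι : Type*} (N : ℕ) (s : Finset ι) (f : ι → Polynomial ℕ) :
    Polynomial.reflect N (∑ i ∈ s, f i) = ∑ i ∈ s, Polynomial.reflect N (f i) := by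
  classical
  induction s using Finset.cons_induction with
  | empty => simp
  | cons a s ha ih =>
    rw [Finset.sum_cons, Finset.sum_cons, Polynomial.reflect_add, ih]

lemma pair_sublist_append_singleton {u : List ℕ} {v a b : ℕ} :
    [a, b] <+ u ++ [v] ↔ ([a, b] <+ u ∨ (a ∈ u ∧ b = v)) := by
  constructor
  · intro h
    obtain ⟨L1, L2, heq, h1, h2⟩ := List.sublist_append_iff.1 h
    rcases List.sublist_singleton.1 h2 with rfl | rfl
    · rw [List.append_nil] at heq
      exact Or.inl (heq ▸ h1)
    · rcases L1 with _ | ⟨c, L1'⟩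
      · simp at heq
      · rcases L1' with _ | ⟨d, L1''⟩
        · injection heq with e1 e2
          injection e2 with e3 e4
          subst e1 e3
          exact Or.inr ⟨List.singleton_sublist.1 h1, rfl⟩
        · simp at heq
  · rintro (h | ⟨ha, rfl⟩)
    · exact h.trans (List.sublist_append_left _ _)
    · exact pair_sublist_append ha (by simp)

lemma mem_linvp_append_max {u : List ℕ} {M : ℕ} (hmax : ∀ a ∈ u, a < M) {q : ℕ × ℕ} :
    q ∈ linvp (u ++ [M]) ↔ q ∈ linvp u := by
  obtain ⟨a, b⟩ := q
  rw [mem_linvp, mem_linvp, pair_sublist_append_singleton]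
  constructor
  · rintro ⟨hba, h | ⟨ha, rfl⟩⟩
    · exact ⟨hba, h⟩
    · exact absurd (hmax a ha) (by omega)
  · rintro ⟨hba, h⟩
    exact ⟨hba, Or.inl h⟩

lemma linv_append_max {u : List ℕ} {M : ℕ} (hmax : ∀ a ∈ u, a < M) :
    linv (u ++ [M]) = linv u := by
  rw [linv_append_singleton]
  have : u.countP (fun a => M < a) = 0 := by
    rw [List.countP_eq_zero]
    intro a ha
    have := hmax a ha
    simp only [decide_eq_true_eq]
    omega
  omega

lemma eq_append_max_of_mem_carrier {P : List ℕ} {M : ℕ} (hmax : ∀ a ∈ P, a < M)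
    (hnd : (P ++ [M]).Nodup) {w : List ℕ} (hw : w ∈ carrier (P ++ [M])) :
    ∃ u, w = u ++ [M] := by
  rw [mem_carrier] at hw
  obtain ⟨hperm, hle⟩ := hw
  have hMw : M ∈ w := hperm.mem_iff.2 (by simp)
  obtain ⟨s, t, rfl⟩ := List.append_of_mem hMw
  rcases t with _ | ⟨c, t'⟩
  · exact ⟨s, rfl⟩
  · exfalso
    have hwn : (s ++ M :: c :: t').Nodup := hperm.symm.nodup hnd
    have hcP : c ∈ P := by
      have hcw : c ∈ s ++ M :: c :: t' := by simp
      have := hperm.mem_iff.1 hcw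
      rcases List.mem_append.1 this with h | h
      · exact h
      · -- c = M, contradicting nodup
        exfalso
        simp only [List.mem_singleton] at h
        subst h
        have : ¬ (s ++ c :: c :: t').Nodup := by
          intro hh
          have := List.Nodup.sublist (l₁ := [c, c]) ?_ hh
          · simp at this
          · exact List.sublist_append_of_sublist_right (by
              exact (List.cons_sublist_cons).2 (by
                exact (List.cons_sublist_cons).2 (List.nil_sublist _)))
          
        exact this hwn
    have hcM : c < M := hmax c hcP
    have hpair : (M, c) ∈ linvp (s ++ M :: c :: t') := by
      rw [mem_linvp]
      refine ⟨hcM, List.sublist_append_of_sublist_right ?_⟩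
      exact (List.cons_sublist_cons).2 ((List.cons_sublist_cons).2 (List.nil_sublist _))
    have := hle _ hpair
    rw [mem_linvp_append_max hmax] at this
    have := (mem_of_mem_linvp this).1
    exact absurd (hmax M this) (by omega)

lemma mem_carrier_append_max {P : List ℕ} {M : ℕ} (hmax : ∀ a ∈ P, a < M)
    (hnd : (P ++ [M]).Nodup) {u : List ℕ} :
    u ++ [M] ∈ carrier (P ++ [M]) ↔ u ∈ carrier P := by
  rw [mem_carrier, mem_carrier]
  constructor
  · rintro ⟨hperm, hle⟩
    have hup : u ~ P := (List.perm_append_right_iff [M]).mp hperm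
    have hmax' : ∀ a ∈ u, a < M := fun a ha => hmax a (hup.mem_iff.1 ha)
    refine ⟨hup, fun q hq => ?_⟩
    have : q ∈ linvp (u ++ [M]) := (mem_linvp_append_max hmax').2 hq
    have := hle _ this
    exact (mem_linvp_append_max hmax).1 this
  · rintro ⟨hup, hle⟩
    have hmax' : ∀ a ∈ u, a < M := fun a ha => hmax a (hup.mem_iff.1 ha)
    refine ⟨hup.append_right [M], fun q hq => ?_⟩
    rw [mem_linvp_append_max hmax'] at hq
    rw [mem_linvp_append_max hmax]
    exact hle _ hq

lemma igf_append_max {P : List ℕ} {M : ℕ} (hmax : ∀ a ∈ P, a < M)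
    (hnd : (P ++ [M]).Nodup) : igf (P ++ [M]) = igf P := by
  rw [igf, igf]
  refine Finset.sum_bij' (fun w _ => w.dropLast) (fun u _ => u ++ [M]) ?_ ?_ ?_ ?_ ?_
  · intro w hw
    obtain ⟨u, rfl⟩ := eq_append_max_of_mem_carrier hmax hnd hw
    simp only [List.dropLast_concat]
    exact (mem_carrier_append_max hmax hnd).1 hw
  · intro u hu
    exact (mem_carrier_append_max hmax hnd).2 hu
  · intro w hw
    obtain ⟨u, rfl⟩ := eq_append_max_of_mem_carrier hmax hnd hw
    simp only [List.dropLast_concat]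
  · intro u hu
    simp only [List.dropLast_concat]
  · intro w hw
    obtain ⟨u, rfl⟩ := eq_append_max_of_mem_carrier hmax hnd hw
    simp only [List.dropLast_concat]
    have hup : u ~ P := by
      have := ((mem_carrier).1 hw).1
      exact (List.perm_append_right_iff [M]).mp this
    have hmax' : ∀ a ∈ u, a < M := fun a ha => hmax a (hup.mem_iff.1 ha)
    rw [linv_append_max hmax']


noncomputable def mgf (l : List ℕ) (p : ℕ → Bool) : Polynomial ℕ :=
  ∑ m ∈ ((l.map (ind p)).permutations).toFinset, Polynomial.X ^ linv m

lemma sum_X_mul {α β : Type*} (s : Finset α) (t : Finset β) (f : α → ℕ) (g : β → ℕ) :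
    (∑ a ∈ s, (Polynomial.X : Polynomial ℕ) ^ f a) * (∑ b ∈ t, (Polynomial.X : Polynomial ℕ) ^ g b)
      = ∑ q ∈ s ×ˢ t, (Polynomial.X : Polynomial ℕ) ^ (f q.1 + g q.2) := by
  rw [Finset.sum_mul_sum, ← Finset.sum_product']
  exact Finset.sum_congr rfl (fun q _ => (pow_add _ _ _).symm)

lemma mem_maskset {l m : List ℕ} {p : ℕ → Bool} :
    m ∈ ((l.map (ind p)).permutations).toFinset ↔ m ~ l.map (ind p) := by
  simp [List.mem_permutations]

section Split

variable {p : ℕ → Bool} {l : List ℕ}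

lemma filter_mem_carrier (hw : l.Nodup) {w : List ℕ} (h : w ∈ carrier l) (q : ℕ → Bool) :
    w.filter q ∈ carrier (l.filter q) := by
  rw [mem_carrier] at h ⊢
  refine ⟨h.1.filter q, fun x hx => ?_⟩
  obtain ⟨a, b⟩ := x
  rw [mem_linvp_filter] at hx ⊢
  exact ⟨h.2 _ hx.1, hx.2⟩

lemma carrier_counts {t b m : List ℕ}
    (H2 : l.filter p ++ l.filter (fun x => !p x) = l)
    (ht : t ∈ carrier (l.filter p)) (hb : b ∈ carrier (l.filter (fun x => !p x)))
    (hm : m ~ l.map (ind p)) :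
    (∀ x ∈ t, p x = true) ∧ (∀ y ∈ b, p y = false) ∧ (∀ e ∈ m, e = 0 ∨ e = 1) ∧
      m.countP (fun e => e = 1) = t.length ∧ m.countP (fun e => e = 0) = b.length := by
  have htp := (mem_carrier.1 ht).1
  have hbp := (mem_carrier.1 hb).1
  refine ⟨?_, ?_, ?_, ?_, ?_⟩
  · intro x hx
    exact (List.mem_filter.1 (htp.mem_iff.1 hx)).2
  · intro y hy
    simpa using (List.mem_filter.1 (hbp.mem_iff.1 hy)).2
  · intro e he
    obtain ⟨x, _, rfl⟩ := List.mem_map.1 (hm.mem_iff.1 he)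
    by_cases h : p x <;> simp [ind, h]
  · rw [hm.countP_eq, List.countP_map, htp.length_eq]
    rw [← List.countP_eq_length_filter]
    apply List.countP_congr
    intro x _
    by_cases h : p x <;> simp [Function.comp, ind, h]
  · rw [hm.countP_eq, List.countP_map, hbp.length_eq]
    rw [← List.countP_eq_length_filter]
    apply List.countP_congr
    intro x _
    by_cases h : p x <;> simp [Function.comp, ind, h]

lemma merge_mem_carrier (hnd : l.Nodup)
    (H1 : ∀ a ∈ l, ∀ b ∈ l, p a = true → p b = false → b < a)
    (H2 : l.filter p ++ l.filter (fun x => !p x) = l)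
    {t b m : List ℕ}
    (ht : t ∈ carrier (l.filter p)) (hb : b ∈ carrier (l.filter (fun x => !p x)))
    (hm : m ~ l.map (ind p)) :
    merge m t b ∈ carrier l := by
  obtain ⟨c1, c2, c3, c4, c5⟩ := carrier_counts H2 ht hb hm
  obtain ⟨F1, F2, F3, F4⟩ := split_merge p m t b c1 c2 c3 c4 c5
  have hperm : merge m t b ~ l := by
    have h5 := ((mem_carrier.1 ht).1.append (mem_carrier.1 hb).1)
    rw [H2] at h5
    exact F4.trans h5
  rw [mem_carrier]
  refine ⟨hperm, fun q hq => ?_⟩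
  obtain ⟨a, c⟩ := q
  have hac := mem_linvp.1 hq
  have hamem : a ∈ l := hperm.mem_iff.1 (hac.2.subset (by simp))
  have hcmem : c ∈ l := hperm.mem_iff.1 (hac.2.subset (by simp))
  cases hpa : p a with
  | true =>
    cases hpc : p c with
    | true =>
      have : (a, c) ∈ linvp ((merge m t b).filter p) := mem_linvp_filter.2 ⟨hq, hpa, hpc⟩
      rw [F1] at this
      have := (mem_carrier.1 ht).2 _ this
      exact (mem_linvp_filter.1 this).1
    | false =>
      rw [mem_linvp]
      refine ⟨hac.1, ?_⟩
      have h1 : a ∈ l.filter p := List.mem_filter.2 ⟨hamem, hpa⟩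
      have h2 : c ∈ l.filter (fun x => !p x) := List.mem_filter.2 ⟨hcmem, by simp [hpc]⟩
      have := pair_sublist_append h1 h2
      rwa [H2] at this
  | false =>
    cases hpc : p c with
    | true =>
      exact absurd (H1 c hcmem a hamem hpc hpa) (by omega)
    | false =>
      have : (a, c) ∈ linvp ((merge m t b).filter (fun x => !p x)) :=
        mem_linvp_filter.2 ⟨hq, by simp [hpa], by simp [hpc]⟩
      rw [F2] at this
      have := (mem_carrier.1 hb).2 _ this
      exact (mem_linvp_filter.1 this).1

lemma igf_split (hnd : l.Nodup)
    (H1 : ∀ a ∈ l, ∀ b ∈ l, p a = true → p b = false → b < a)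
    (H2 : l.filter p ++ l.filter (fun x => !p x) = l) :
    igf l = igf (l.filter p) * (igf (l.filter (fun x => !p x)) * mgf l p) := by
  rw [igf, igf, igf, mgf, sum_X_mul, sum_X_mul]
  refine Finset.sum_bij' (fun w _ => (w.filter p, (w.filter (fun x => !p x), w.map (ind p))))
    (fun q _ => merge q.2.2 q.1 q.2.1) ?_ ?_ ?_ ?_ ?_
  · intro w hw
    rw [Finset.mem_product]
    refine ⟨filter_mem_carrier hnd hw p, ?_⟩
    rw [Finset.mem_product]
    refine ⟨filter_mem_carrier hnd hw _, ?_⟩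
    rw [mem_maskset]
    exact (mem_carrier.1 hw).1.map (ind p)
  · intro q hq
    rw [Finset.mem_product] at hq
    obtain ⟨ht, hq2⟩ := hq
    rw [Finset.mem_product] at hq2
    obtain ⟨hb, hm⟩ := hq2
    exact merge_mem_carrier hnd H1 H2 ht hb (mem_maskset.1 hm)
  · intro w hw
    simp only
    rw [merge_split]
  · intro q hq
    rw [Finset.mem_product] at hq
    obtain ⟨ht, hq2⟩ := hq
    rw [Finset.mem_product] at hq2
    obtain ⟨hb, hm⟩ := hq2
    obtain ⟨c1, c2, c3, c4, c5⟩ := carrier_counts H2 ht hb (mem_maskset.1 hm)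
    obtain ⟨F1, F2, F3, F4⟩ := split_merge p q.2.2 q.1 q.2.1 c1 c2 c3 c4 c5
    rw [F1, F2, F3]
  · intro w hw
    simp only
    have hperm := (mem_carrier.1 hw).1
    have H1w : ∀ a ∈ w, ∀ b ∈ w, p a = true → p b = false → b < a := by
      intro a ha b hb
      exact H1 a (hperm.mem_iff.1 ha) b (hperm.mem_iff.1 hb)
    rw [linv_split p w H1w, Nat.add_assoc]

lemma replicate_decomp
    (H2 : l.filter p ++ l.filter (fun x => !p x) = l) :
    l.map (ind p) = List.replicate (l.filter p).length 1 ++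
      List.replicate (l.filter (fun x => !p x)).length 0 := by
  conv_lhs => rw [← H2]
  rw [List.map_append]
  congr 1
  · rw [List.eq_replicate_iff]
    refine ⟨by simp, fun b hb => ?_⟩
    obtain ⟨x, hx, rfl⟩ := List.mem_map.1 hb
    have := (List.mem_filter.1 hx).2
    simp [ind, this]
  · rw [List.eq_replicate_iff]
    refine ⟨by simp, fun b hb => ?_⟩
    obtain ⟨x, hx, rfl⟩ := List.mem_map.1 hb
    have := (List.mem_filter.1 hx).2
    simp only [Bool.not_eq_true'] at this
    simp [ind, this]

lemma linv_mask_le {m : List ℕ} (hm : m ~ l.map (ind p))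
    (H2 : l.filter p ++ l.filter (fun x => !p x) = l) :
    linv m + linv m.reverse = (l.filter p).length * (l.filter (fun x => !p x)).length := by
  have hrep := replicate_decomp H2
  have hbin : ∀ e ∈ m, e = 0 ∨ e = 1 := by
    intro e he
    obtain ⟨x, _, rfl⟩ := List.mem_map.1 (hm.mem_iff.1 he)
    by_cases h : p x <;> simp [ind, h]
  rw [linv_binary_reverse m hbin, hm.countP_eq, hm.countP_eq, hrep]
  rw [List.countP_append, List.countP_append, List.countP_replicate, List.countP_replicate,
    List.countP_replicate, List.countP_replicate]
  norm_num

lemma linv_maskbase (H2 : l.filter p ++ l.filter (fun x => !p x) = l) :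
    linv (l.map (ind p)) = (l.filter p).length * (l.filter (fun x => !p x)).length := by
  rw [replicate_decomp H2, linv_replicate_blocks]

lemma natDegree_mgf_le (H2 : l.filter p ++ l.filter (fun x => !p x) = l) :
    (mgf l p).natDegree ≤ (l.filter p).length * (l.filter (fun x => !p x)).length := by
  refine (Polynomial.natDegree_sum_le _ _).trans ?_
  rw [Finset.fold_max_le]
  refine ⟨Nat.zero_le _, fun m hm => ?_⟩
  simp only [Function.comp, Polynomial.natDegree_X_pow]
  have := linv_mask_le (mem_maskset.1 hm) H2
  omega

lemma reflect_mgf (H2 : l.filter p ++ l.filter (fun x => !p x) = l) :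
    Polynomial.reflect ((l.filter p).length * (l.filter (fun x => !p x)).length) (mgf l p)
      = mgf l p := by
  rw [mgf, reflect_finset_sum]
  set N := (l.filter p).length * (l.filter (fun x => !p x)).length with hN
  have key : ∀ m ∈ (l.map (ind p)).permutations.toFinset,
      Polynomial.reflect N (Polynomial.X ^ linv m) = (Polynomial.X : Polynomial ℕ) ^ linv m.reverse := by
    intro m hm
    have hsum := linv_mask_le (mem_maskset.1 hm) H2
    rw [Polynomial.reflect_monomial, Polynomial.revAt_le (by omega)]
    congr 1
    omega
  rw [Finset.sum_congr rfl key]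
  refine Finset.sum_bij' (fun m _ => m.reverse) (fun m _ => m.reverse) ?_ ?_ ?_ ?_ ?_
  · intro m hm
    rw [mem_maskset] at hm ⊢
    exact (List.reverse_perm m).trans hm
  · intro m hm
    rw [mem_maskset] at hm ⊢
    exact (List.reverse_perm m).trans hm
  · intro m _; simp
  · intro m _; simp
  · intro m _; simp

end Split


lemma carrier_nil : carrier [] = {([] : List ℕ)} := by
  ext w
  rw [mem_carrier]
  simp only [Finset.mem_singleton]
  constructor
  · rintro ⟨h, _⟩; exact List.Perm.eq_nil h
  · rintro rfl; exact ⟨List.Perm.refl _, lwleL_refl _⟩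

lemma igf_nil : igf [] = 1 := by
  rw [igf, carrier_nil, Finset.sum_singleton, linv_nil, pow_zero]

lemma reflect_igf_nil : Polynomial.reflect (linv ([] : List ℕ)) (igf []) = igf [] := by
  rw [igf_nil, linv_nil, ← pow_zero (Polynomial.X : Polynomial ℕ),
    Polynomial.reflect_monomial]
  norm_num

theorem reflect_igf : ∀ (N : ℕ) (l : List ℕ), l.length ≤ N → l.Nodup → ¬ contains132L l →
    Polynomial.reflect (linv l) (igf l) = igf l := by
  intro N
  induction N with
  | zero =>
    intro l hl _ _
    rw [List.eq_nil_of_length_eq_zero (Nat.le_zero.1 hl)]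
    exact reflect_igf_nil
  | succ N ih =>
    intro l hlen hnd havoid
    rcases eq_or_ne l [] with rfl | hne
    · exact reflect_igf_nil
    -- maximum element
    have htne : l.toFinset.Nonempty := by
      rcases List.exists_mem_of_ne_nil l hne with ⟨x, hx⟩
      exact ⟨x, List.mem_toFinset.2 hx⟩
    obtain ⟨M, hMl, hle⟩ : ∃ M, M ∈ l ∧ ∀ a ∈ l, a ≤ M :=
      ⟨l.toFinset.max' htne, List.mem_toFinset.1 (l.toFinset.max'_mem htne),
        fun a ha => l.toFinset.le_max' a (List.mem_toFinset.2 ha)⟩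
    obtain ⟨P, S, rfl⟩ := List.append_of_mem hMl
    rw [List.nodup_append] at hnd
    obtain ⟨hndP, hndMS, hdisj⟩ := hnd
    rw [List.nodup_cons] at hndMS
    obtain ⟨hMS, hndS⟩ := hndMS
    have hMP : M ∉ P := fun h => hdisj M h M (by simp) rfl
    have hnd' : (P ++ M :: S).Nodup := by
      rw [List.nodup_append, List.nodup_cons]
      exact ⟨hndP, ⟨hMS, hndS⟩, hdisj⟩
    have hmaxP : ∀ a ∈ P, a < M := by
      intro a ha
      have h1 : a ≤ M := hle a (by simp [ha])
      have h2 : a ≠ M := fun h => hMP (h ▸ ha)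
      omega
    rcases S with _ | ⟨y, S'⟩
    · -- max at the end
      rw [show P ++ [M] = P ++ [M] from rfl] at *
      have hnd2 : (P ++ [M]).Nodup := hnd'
      rw [igf_append_max hmaxP hnd2, linv_append_max hmaxP]
      have hlenP : P.length ≤ N := by
        have := hlen
        simp only [List.length_append, List.length_cons, List.length_nil] at this
        omega
      exact ih P hlenP hndP
        (fun hc => havoid (contains132L_of_sublist (List.sublist_append_left _ _) hc))
    · -- genuine split
      set S := y :: S' with hS
      have hSne : S ≠ [] := by simp [hS]
      set p : ℕ → Bool := fun a => decide (a ∈ P ∨ a = M) with hp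
      have hpP : ∀ x ∈ P, p x = true := by
        intro x hx; simp [hp, hx]
      have hpM : p M = true := by simp [hp]
      have hpS : ∀ x ∈ S, p x = false := by
        intro x hx
        have h1 : x ∉ P := fun h => hdisj x h x (by simp [hx]) rfl
        have h2 : x ≠ M := fun h => hMS (h ▸ hx)
        simp [hp, h1, h2]
      have hfp : (P ++ M :: S).filter p = P ++ [M] := by
        rw [List.filter_append, List.filter_cons_of_pos hpM,
          List.filter_eq_self.2 hpP, List.filter_eq_nil_iff.2 (by
            intro x hx; simp only [Bool.not_eq_true]; exact hpS x hx)]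
      have hfb : (P ++ M :: S).filter (fun x => !p x) = S := by
        rw [List.filter_append, List.filter_cons_of_neg (by simp [hpM]),
          List.filter_eq_nil_iff.2 (by
            intro x hx; simp only [Bool.not_eq_true']; simpa using hpP x hx),
          List.filter_eq_self.2 (by
            intro x hx; simpa using hpS x hx)]
        simp
      have hSsub : ∀ b ∈ P ++ M :: S, p b = false → b ∈ S := by
        intro b hb hpb
        rcases List.mem_append.1 hb with h | h
        · rw [hpP b h] at hpb; exact absurd hpb (by simp)
        · rcases List.mem_cons.1 h with rfl | h
          · rw [hpM] at hpb; exact absurd hpb (by simp)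
          · exact h
      have H1 : ∀ a ∈ P ++ M :: S, ∀ b ∈ P ++ M :: S, p a = true → p b = false → b < a := by
        intro a ha b hb hpa hpb
        have hbS : b ∈ S := hSsub b hb hpb
        have hbM : b < M := by
          have h1 : b ≤ M := hle b hb
          have h2 : b ≠ M := fun h => hMS (h ▸ hbS)
          omega
        have hamem : a ∈ P ∨ a = M := by simpa [hp] using hpa
        rcases hamem with haP | rfl
        · by_contra hcon
          have hab : a ≠ b := fun h => hdisj a haP a (by simp [h ▸ hbS]) rfl
          have halt : a < b := by omega
          apply havoid
          refine ⟨a, b, M, halt, hbM, ?_⟩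
          have h1 : [a] <+ P := List.singleton_sublist.2 haP
          have h2 : [M, b] <+ M :: S :=
            (List.cons_sublist_cons).2 (List.singleton_sublist.2 hbS)
          exact h1.append h2
        · exact hbM
      have H2 : (P ++ M :: S).filter p ++ (P ++ M :: S).filter (fun x => !p x) = P ++ M :: S := by
        rw [hfp, hfb, List.append_assoc, List.singleton_append]
      -- length bounds
      have hlenl : (P ++ M :: S).length = P.length + S.length + 1 := by simp; omega
      have hlentop : ((P ++ M :: S).filter p).length ≤ N := by
        rw [hfp]
        have hS1 : 1 ≤ S.length := by rw [hS]; simp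
        simp only [List.length_append, List.length_cons, List.length_nil] at hlen ⊢
        omega
      have hlenbot : ((P ++ M :: S).filter (fun x => !p x)).length ≤ N := by
        rw [hfb]
        simp only [List.length_append, List.length_cons] at hlen
        omega
      -- nodup and avoidance for the pieces
      have hndtop : ((P ++ M :: S).filter p).Nodup := hnd'.filter p
      have hndbot : ((P ++ M :: S).filter (fun x => !p x)).Nodup := hnd'.filter _
      have havtop : ¬ contains132L ((P ++ M :: S).filter p) := fun hc =>
        havoid (contains132L_of_sublist List.filter_sublist hc)
      have havbot : ¬ contains132L ((P ++ M :: S).filter (fun x => !p x)) := fun hc =>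
        havoid (contains132L_of_sublist List.filter_sublist hc)
      -- the length decomposition
      have hdecomp : linv (P ++ M :: S) = linv ((P ++ M :: S).filter p)
          + linv ((P ++ M :: S).filter (fun x => !p x))
          + ((P ++ M :: S).filter p).length * ((P ++ M :: S).filter (fun x => !p x)).length := by
        have h := linv_split p (P ++ M :: S) H1
        rwa [linv_maskbase H2] at h
      rw [igf_split hnd' H1 H2, hdecomp]
      have hassoc : linv ((P ++ M :: S).filter p)
          + linv ((P ++ M :: S).filter (fun x => !p x))
          + ((P ++ M :: S).filter p).length * ((P ++ M :: S).filter (fun x => !p x)).length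
          = linv ((P ++ M :: S).filter p)
          + (linv ((P ++ M :: S).filter (fun x => !p x))
            + ((P ++ M :: S).filter p).length * ((P ++ M :: S).filter (fun x => !p x)).length) := by
        ring
      rw [hassoc]
      rw [Polynomial.reflect_mul _ _ (natDegree_igf_le hndtop)
        (le_trans Polynomial.natDegree_mul_le
          (add_le_add (natDegree_igf_le hndbot) (natDegree_mgf_le H2)))]
      rw [Polynomial.reflect_mul _ _ (natDegree_igf_le hndbot) (natDegree_mgf_le H2)]
      rw [ih _ hlentop hndtop havtop, ih _ hlenbot hndbot havbot, reflect_mgf H2]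

end RankSym

theorem Equiv.Perm.inv_apply_self {α : Type*} (f : Equiv.Perm α) (x : α) : f⁻¹ (f x) = x :=
  f.symm_apply_apply x

theorem Equiv.Perm.apply_inv_self {α : Type*} (f : Equiv.Perm α) (x : α) : f (f⁻¹ x) = x :=
  f.apply_symm_apply x

namespace RankSymP
open Equiv


def invF {m : ℕ} (σ : Equiv.Perm (Fin m)) : Finset (Fin m × Fin m) :=
  Finset.univ.filter (fun q => q.2 < q.1 ∧ σ⁻¹ q.1 < σ⁻¹ q.2)

lemma mem_invF {m : ℕ} {σ : Equiv.Perm (Fin m)} {q : Fin m × Fin m} :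
    q ∈ invF σ ↔ (q.2 < q.1 ∧ σ⁻¹ q.1 < σ⁻¹ q.2) := by
  simp [invF]

lemma invF_one {m : ℕ} : invF (1 : Equiv.Perm (Fin m)) = ∅ := by
  ext q
  simp only [mem_invF, Finset.notMem_empty, iff_false]
  rintro ⟨h1, h2⟩
  simp only [inv_one, Perm.one_apply] at h2
  exact absurd h1 (not_lt.2 h2.le)

lemma swap_lt_iff {n : ℕ} (i : Fin n) (p q : Fin (n+1))
    (h1 : ¬(p = i.castSucc ∧ q = i.succ)) (h2 : ¬(p = i.succ ∧ q = i.castSucc)) :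
    (Equiv.swap i.castSucc i.succ p < Equiv.swap i.castSucc i.succ q ↔ p < q) := by
  have hci : (i.castSucc : Fin (n+1)).val = i.val := rfl
  have hsi : (i.succ : Fin (n+1)).val = i.val + 1 := rfl
  by_cases hp1 : p = i.castSucc
  · subst hp1
    have hq : q ≠ i.succ := fun h => h1 ⟨rfl, h⟩
    by_cases hq1 : q = i.castSucc
    · subst hq1; simp
    · rw [Equiv.swap_apply_left, Equiv.swap_apply_of_ne_of_ne hq1 hq]
      rw [Fin.lt_def, Fin.lt_def, hci, hsi]
      have e1 : q.val ≠ i.val := fun h => hq1 (Fin.ext (by rw [h, hci]))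
      have e2 : q.val ≠ i.val + 1 := fun h => hq (Fin.ext (by rw [h, hsi]))
      omega
  · by_cases hp2 : p = i.succ
    · subst hp2
      have hq : q ≠ i.castSucc := fun h => h2 ⟨rfl, h⟩
      by_cases hq1 : q = i.succ
      · subst hq1; simp
      · rw [Equiv.swap_apply_right, Equiv.swap_apply_of_ne_of_ne hq hq1]
        rw [Fin.lt_def, Fin.lt_def, hci, hsi]
        have e1 : q.val ≠ i.val := fun h => hq (Fin.ext (by rw [h, hci]))
        have e2 : q.val ≠ i.val + 1 := fun h => hq1 (Fin.ext (by rw [h, hsi]))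
        omega
    · rw [Equiv.swap_apply_of_ne_of_ne hp1 hp2]
      by_cases hq1 : q = i.castSucc
      · subst hq1
        rw [Equiv.swap_apply_left, Fin.lt_def, Fin.lt_def, hci, hsi]
        have e1 : p.val ≠ i.val := fun h => hp1 (Fin.ext (by rw [h, hci]))
        have e2 : p.val ≠ i.val + 1 := fun h => hp2 (Fin.ext (by rw [h, hsi]))
        omega
      · by_cases hq2 : q = i.succ
        · subst hq2
          rw [Equiv.swap_apply_right, Fin.lt_def, Fin.lt_def, hci, hsi]
          have e1 : p.val ≠ i.val := fun h => hp1 (Fin.ext (by rw [h, hci]))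
          have e2 : p.val ≠ i.val + 1 := fun h => hp2 (Fin.ext (by rw [h, hsi]))
          omega
        · rw [Equiv.swap_apply_of_ne_of_ne hq1 hq2]

lemma castSucc_lt_succ {n : ℕ} (i : Fin n) : (i.castSucc : Fin (n+1)) < i.succ := by
  rw [Fin.lt_def]
  exact Nat.lt_succ_self _

lemma mulsT_inv_apply {n : ℕ} (σ : Equiv.Perm (Fin (n+1))) (i : Fin n) (a : Fin (n+1)) :
    (σ * simpleT i)⁻¹ a = Equiv.swap i.castSucc i.succ (σ⁻¹ a) := by
  rw [mul_inv_rev, Perm.mul_apply, simpleT, Equiv.swap_inv]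

lemma invF_ascent {n : ℕ} (σ : Equiv.Perm (Fin (n+1))) (i : Fin n)
    (h : σ i.castSucc < σ i.succ) :
    invF (σ * simpleT i) = insert (σ i.succ, σ i.castSucc) (invF σ) ∧
      (σ i.succ, σ i.castSucc) ∉ invF σ := by
  have hnotmem : (σ i.succ, σ i.castSucc) ∉ invF σ := by
    rw [mem_invF]
    rintro ⟨-, h2⟩
    simp only [Perm.inv_apply_self] at h2
    exact absurd (castSucc_lt_succ i) (not_lt.2 h2.le)
  refine ⟨?_, hnotmem⟩
  ext q
  obtain ⟨a, b⟩ := q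
  rw [mem_invF, Finset.mem_insert, mem_invF]
  rw [mulsT_inv_apply, mulsT_inv_apply]
  by_cases hab : a = b
  · subst hab
    simp only [lt_self_iff_false, false_and, false_iff]
    rintro (h' | h')
    · rw [Prod.mk.injEq] at h'
      obtain ⟨q1, q2⟩ := h'
      have q3 : σ i.succ = σ i.castSucc := by rw [← q1, ← q2]
      have q4 := σ.injective q3
      exact absurd (q4 ▸ castSucc_lt_succ i) (lt_irrefl _)
    · exact h'
  · have hPQ : σ⁻¹ a ≠ σ⁻¹ b := fun h' => hab (by
      have := congrArg σ h'
      simpa using this)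
    by_cases hc1 : σ⁻¹ a = i.castSucc ∧ σ⁻¹ b = i.succ
    · -- a = u, b = v
      obtain ⟨e1, e2⟩ := hc1
      have ha : a = σ i.castSucc := by rw [← e1, Perm.apply_inv_self]
      have hb : b = σ i.succ := by rw [← e2, Perm.apply_inv_self]
      subst ha hb
      rw [e1, e2, Equiv.swap_apply_left, Equiv.swap_apply_right]
      constructor
      · rintro ⟨h3, h4⟩
        exact absurd (h.trans h3) (lt_irrefl _)
      · rintro (h' | ⟨h3, h4⟩)
        · have q1 := congrArg Prod.fst h'
          simp only at q1
          have : i.castSucc = i.succ := σ.injective q1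
          exact absurd (castSucc_lt_succ i) (this ▸ lt_irrefl _)
        · exact absurd (h.trans h3) (lt_irrefl _)
    · by_cases hc2 : σ⁻¹ a = i.succ ∧ σ⁻¹ b = i.castSucc
      · -- a = v, b = u
        obtain ⟨e1, e2⟩ := hc2
        have ha : a = σ i.succ := by rw [← e1, Perm.apply_inv_self]
        have hb : b = σ i.castSucc := by rw [← e2, Perm.apply_inv_self]
        subst ha hb
        rw [e1, e2, Equiv.swap_apply_left, Equiv.swap_apply_right]
        simp only [true_or, iff_true, Prod.mk.injEq]
        constructor
        · exact h
        · exact castSucc_lt_succ i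
      · rw [swap_lt_iff i _ _ hc1 hc2]
        have hne : (a, b) ≠ (σ i.succ, σ i.castSucc) := by
          intro h'
          have q1 := congrArg Prod.fst h'
          have q2 := congrArg Prod.snd h'
          simp only at q1 q2
          exact hc2 ⟨by rw [q1, Perm.inv_apply_self], by rw [q2, Perm.inv_apply_self]⟩
        constructor
        · intro h'; exact Or.inr h'
        · rintro (h' | h')
          · exact absurd h' hne
          · exact h'

lemma simpleT_mul_self {n : ℕ} (i : Fin n) : simpleT i * simpleT i = 1 := by
  rw [simpleT, Equiv.swap_mul_self]

lemma invF_descent {n : ℕ} (σ : Equiv.Perm (Fin (n+1))) (i : Fin n)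
    (h : σ i.succ < σ i.castSucc) :
    invF σ = insert (σ i.castSucc, σ i.succ) (invF (σ * simpleT i)) ∧
      (σ i.castSucc, σ i.succ) ∉ invF (σ * simpleT i) := by
  have e1 : (σ * simpleT i) i.castSucc = σ i.succ := by
    rw [Perm.mul_apply, simpleT, Equiv.swap_apply_left]
  have e2 : (σ * simpleT i) i.succ = σ i.castSucc := by
    rw [Perm.mul_apply, simpleT, Equiv.swap_apply_right]
  have h' : (σ * simpleT i) i.castSucc < (σ * simpleT i) i.succ := by rw [e1, e2]; exact h
  have := invF_ascent (σ * simpleT i) i h'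
  rw [e1, e2, mul_assoc, simpleT_mul_self, mul_one] at this
  exact this

lemma card_invF_mul_simpleT {n : ℕ} (σ : Equiv.Perm (Fin (n+1))) (i : Fin n) :
    (invF (σ * simpleT i)).card ≤ (invF σ).card + 1 ∧
      (invF σ).card ≤ (invF (σ * simpleT i)).card + 1 := by
  have hne : σ i.castSucc ≠ σ i.succ := fun h =>
    absurd (castSucc_lt_succ i) ((σ.injective h) ▸ lt_irrefl _)
  rcases lt_or_gt_of_ne hne with h | h
  · obtain ⟨hins, hmem⟩ := invF_ascent σ i h
    rw [hins, Finset.card_insert_of_notMem hmem]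
    omega
  · obtain ⟨hins, hmem⟩ := invF_descent σ i h
    rw [hins, Finset.card_insert_of_notMem hmem]
    omega

lemma card_invF_le_word {n : ℕ} (l : List (Fin n)) :
    (invF ((l.map simpleT).prod)).card ≤ l.length := by
  induction l using List.reverseRecOn with
  | nil => simp [invF_one]
  | append_singleton l i ih =>
    rw [List.map_append, List.prod_append, List.map_singleton, List.prod_singleton]
    have := (card_invF_mul_simpleT ((l.map simpleT).prod) i).1
    rw [List.length_append, List.length_singleton]
    omega

lemma eq_one_of_invF_card_eq_zero {m : ℕ} (σ : Equiv.Perm (Fin m))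
    (h : (invF σ).card = 0) : σ = 1 := by
  rw [Finset.card_eq_zero] at h
  have hmono : StrictMono (σ⁻¹ : Equiv.Perm (Fin m)) := by
    intro x y hxy
    rcases lt_trichotomy ((σ⁻¹ : Equiv.Perm (Fin m)) x) (σ⁻¹ y) with h' | h' | h'
    · exact h'
    · exact absurd (σ⁻¹.injective h') (ne_of_lt hxy)
    · exfalso
      have : (y, x) ∈ invF σ := mem_invF.2 ⟨hxy, h'⟩
      rw [h] at this
      exact absurd this (Finset.notMem_empty _)
  have hfun : ((σ⁻¹ : Equiv.Perm (Fin m)) : Fin m → Fin m) = id := by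
    have hs : Function.Surjective ((σ⁻¹ : Equiv.Perm (Fin m)) : Fin m → Fin m) :=
      Finite.surjective_of_injective hmono.injective
    have heq : (StrictMono.orderIsoOfSurjective _ hmono hs) = OrderIso.refl (Fin m) :=
      Subsingleton.elim _ _
    funext x
    have := congrArg (fun (g : Fin m ≃o Fin m) => g x) heq
    simpa using this
  have : σ⁻¹ = 1 := Equiv.ext (fun x => by simpa using congrFun hfun x)
  exact inv_eq_one.1 this

lemma exists_descent {n : ℕ} (σ : Equiv.Perm (Fin (n+1))) (h : σ ≠ 1) :
    ∃ i : Fin n, σ i.succ < σ i.castSucc := by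
  by_contra hcon
  push_neg at hcon
  have hmono : StrictMono σ := by
    rw [Fin.strictMono_iff_lt_succ]
    intro i
    have hne : σ i.castSucc ≠ σ i.succ := fun h' =>
      absurd (castSucc_lt_succ i) ((σ.injective h') ▸ lt_irrefl _)
    have := hcon i
    rcases lt_or_gt_of_ne hne with h' | h'
    · exact h'
    · exact absurd h' (not_lt.2 this)
  apply h
  have hs : Function.Surjective (σ : Fin (n+1) → Fin (n+1)) :=
    Finite.surjective_of_injective hmono.injective
  have heq : (StrictMono.orderIsoOfSurjective _ hmono hs) = OrderIso.refl (Fin (n+1)) :=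
    Subsingleton.elim _ _
  apply Equiv.ext
  intro x
  have := congrArg (fun (g : Fin (n+1) ≃o Fin (n+1)) => g x) heq
  simpa using this

lemma exists_word {n : ℕ} : ∀ (k : ℕ) (σ : Equiv.Perm (Fin (n+1))), (invF σ).card = k →
    ∃ l : List (Fin n), l.length = k ∧ (l.map simpleT).prod = σ := by
  intro k
  induction k with
  | zero =>
    intro σ hσ
    exact ⟨[], rfl, by rw [List.map_nil, List.prod_nil, (eq_one_of_invF_card_eq_zero σ hσ)]⟩
  | succ k ih =>
    intro σ hσ
    have hne : σ ≠ 1 := by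
      intro h
      rw [h, invF_one] at hσ
      simp at hσ
    obtain ⟨i, hi⟩ := exists_descent σ hne
    obtain ⟨hins, hmem⟩ := invF_descent σ i hi
    have hcard : (invF (σ * simpleT i)).card = k := by
      rw [hins, Finset.card_insert_of_notMem hmem] at hσ
      omega
    obtain ⟨l, hlen, hprod⟩ := ih _ hcard
    refine ⟨l ++ [i], by simp [hlen], ?_⟩
    rw [List.map_append, List.prod_append, List.map_singleton, List.prod_singleton, hprod,
      mul_assoc, simpleT_mul_self, mul_one]

theorem len_eq_card_invF {n : ℕ} (σ : Equiv.Perm (Fin (n+1))) :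
    len σ = (invF σ).card := by
  obtain ⟨l, hlen, hprod⟩ := exists_word (invF σ).card σ rfl
  apply le_antisymm
  · exact Nat.sInf_le ⟨l, hlen, hprod⟩
  · have hne : {k | ∃ l : List (Fin n), l.length = k ∧ (l.map simpleT).prod = σ}.Nonempty :=
      ⟨_, l, hlen, hprod⟩
    obtain ⟨l0, hl0, hp0⟩ := Nat.sInf_mem hne
    rw [len, ← hl0, ← hp0]
    exact card_invF_le_word l0

end RankSymP

namespace RankSymT
open RankSym RankSymP Equiv List

variable {m : ℕ}

/-- the one-line word of a permutation -/
def word (σ : Equiv.Perm (Fin m)) : List ℕ := List.ofFn (fun i => (σ i : ℕ))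

lemma word_length (σ : Equiv.Perm (Fin m)) : (word σ).length = m := List.length_ofFn

lemma word_getElem (σ : Equiv.Perm (Fin m)) (i : ℕ) (h : i < (word σ).length) :
    (word σ)[i] = (σ ⟨i, by rwa [word_length] at h⟩ : ℕ) := by
  simp only [word, List.getElem_ofFn]

lemma word_nodup (σ : Equiv.Perm (Fin m)) : (word σ).Nodup := by
  simp only [word, List.nodup_ofFn]
  intro i j h
  exact σ.injective (Fin.ext h)

lemma mem_word {σ : Equiv.Perm (Fin m)} {a : ℕ} : a ∈ word σ ↔ a < m := by
  simp only [word, List.mem_ofFn]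
  constructor
  · rintro ⟨i, rfl⟩; exact (σ i).isLt
  · intro h; exact ⟨σ⁻¹ ⟨a, h⟩, by simp⟩

lemma pair_sublist_iff {α : Type*} {l : List α} {a b : α} :
    [a, b] <+ l ↔ ∃ (i j : ℕ) (hi : i < l.length) (hj : j < l.length),
      i < j ∧ l[i] = a ∧ l[j] = b := by
  induction l with
  | nil =>
    constructor
    · intro h; exact absurd h.length_le (by simp)
    · rintro ⟨i, j, hi, hj, -⟩; exact absurd hj (by simp)
  | cons x xs ih =>
    rw [List.sublist_cons_iff]
    constructor
    · rintro (h | ⟨r, hr, hrs⟩)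
      · obtain ⟨i, j, hi, hj, hij, ha, hb⟩ := ih.1 h
        refine ⟨i+1, j+1, by simpa using hi, by simpa using hj, by omega, ?_, ?_⟩
        · simpa using ha
        · simpa using hb
      · have h1 : a = x := by injection hr
        have h2 : r = [b] := by injection hr with _ h2; exact h2.symm ▸ rfl
        subst h2
        have hb : b ∈ xs := List.singleton_sublist.1 hrs
        obtain ⟨k, hk, hkb⟩ := List.mem_iff_getElem.1 hb
        refine ⟨0, k+1, by simp, by simpa using hk, by omega, by simpa using h1.symm, by simpa using hkb⟩
    · rintro ⟨i, j, hi, hj, hij, ha, hb⟩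
      cases i with
      | zero =>
        right
        have hax : x = a := by simpa using ha
        cases j with
        | zero => omega
        | succ j' =>
          have hb' : xs[j']'(by simpa using hj) = b := by simpa using hb
          refine ⟨[b], by rw [hax], List.singleton_sublist.2 ?_⟩
          exact hb' ▸ List.getElem_mem _
      | succ i' =>
        left
        cases j with
        | zero => omega
        | succ j' =>
          refine ih.2 ⟨i', j', by simpa using hi, by simpa using hj, by omega, ?_, ?_⟩
          · simpa using ha
          · simpa using hb

lemma triple_sublist_index {α : Type*} {l : List α} {a b c : α} (h : [a, b, c] <+ l) :
    ∃ (i j k : ℕ) (hi : i < l.length) (hj : j < l.length) (hk : k < l.length),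
      i < j ∧ j < k ∧ l[i] = a ∧ l[j] = b ∧ l[k] = c := by
  induction l with
  | nil => exact absurd h.length_le (by simp)
  | cons x xs ih =>
    rcases List.sublist_cons_iff.1 h with h' | ⟨r, hr, hrs⟩
    · obtain ⟨i, j, k, hi, hj, hk, hij, hjk, ha, hb, hc⟩ := ih h'
      exact ⟨i+1, j+1, k+1, by simpa using hi, by simpa using hj, by simpa using hk,
        by omega, by omega, by simpa using ha, by simpa using hb, by simpa using hc⟩
    · have h1 : a = x := by injection hr
      have h2 : r = [b, c] := by injection hr with _ h2; exact h2.symm ▸ rfl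
      subst h2
      obtain ⟨j, k, hj, hk, hjk, hbb, hcc⟩ := pair_sublist_iff.1 hrs
      exact ⟨0, j+1, k+1, by simp, by simpa using hj, by simpa using hk, by omega, by omega,
        by simpa using h1.symm, by simpa using hbb, by simpa using hcc⟩

lemma mem_linvp_word {σ : Equiv.Perm (Fin m)} {a b : ℕ} :
    (a, b) ∈ linvp (word σ) ↔ ∃ x y : Fin m, x < y ∧ (σ x : ℕ) = a ∧ (σ y : ℕ) = b ∧ b < a := by
  rw [mem_linvp]
  constructor
  · rintro ⟨hba, hsub⟩
    obtain ⟨i, j, hi, hj, hij, ha, hb⟩ := pair_sublist_iff.1 hsub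
    rw [word_getElem] at ha hb
    exact ⟨⟨i, by rwa [word_length] at hi⟩, ⟨j, by rwa [word_length] at hj⟩, hij, ha, hb, hba⟩
  · rintro ⟨x, y, hxy, ha, hb, hba⟩
    have hx : (x : ℕ) < (word σ).length := by rw [word_length]; exact x.isLt
    have hy : (y : ℕ) < (word σ).length := by rw [word_length]; exact y.isLt
    refine ⟨hba, pair_sublist_iff.2 ⟨x, y, hx, hy, hxy, ?_, ?_⟩⟩
    · rw [word_getElem]; simp only [Fin.eta]; exact ha
    · rw [word_getElem]; simp only [Fin.eta]; exact hb

lemma mem_invSet {σ : Equiv.Perm (Fin m)} {q : Fin m × Fin m} :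
    q ∈ invSet σ ↔ q.2 < q.1 ∧ σ⁻¹ q.1 < σ⁻¹ q.2 := by
  constructor
  · rintro ⟨i, j, hij, hlt, rfl⟩
    simp only [Perm.inv_apply_self]
    exact ⟨hlt, hij⟩
  · rintro ⟨h1, h2⟩
    exact ⟨σ⁻¹ q.1, σ⁻¹ q.2, h2, by simpa using h1, by simp⟩

lemma wle_iff {σ π : Equiv.Perm (Fin m)} : wle σ π ↔ lwleL (word σ) (word π) := by
  constructor
  · intro h q hq
    obtain ⟨a, b⟩ := q
    obtain ⟨x, y, hxy, ha, hb, hba⟩ := mem_linvp_word.1 hq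
    have hmem : (σ x, σ y) ∈ invSet σ := ⟨x, y, hxy, by
      rw [Fin.lt_def, ha, hb]; exact hba, rfl⟩
    have hmemπ := h hmem
    rw [mem_invSet] at hmemπ
    obtain ⟨h1, h2⟩ := hmemπ
    refine mem_linvp_word.2 ⟨π⁻¹ (σ x), π⁻¹ (σ y), h2, ?_, ?_, hba⟩
    · rw [Perm.apply_inv_self, ha]
    · rw [Perm.apply_inv_self, hb]
  · rintro h q ⟨i, j, hij, hlt, rfl⟩
    have hw : ((σ i : ℕ), (σ j : ℕ)) ∈ linvp (word σ) :=
      mem_linvp_word.2 ⟨i, j, hij, rfl, rfl, hlt⟩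
    obtain ⟨x, y, hxy, ha, hb, hba⟩ := mem_linvp_word.1 (h _ hw)
    exact ⟨x, y, hxy, by rw [Fin.lt_def, ha, hb]; exact hba,
      by rw [Prod.mk.injEq]; exact ⟨(Fin.ext ha).symm, (Fin.ext hb).symm⟩⟩

lemma linvp_toFinset_eq {σ : Equiv.Perm (Fin m)} :
    (linvp (word σ)).toFinset = (invF σ).image (fun q => ((q.1 : ℕ), (q.2 : ℕ))) := by
  ext q
  obtain ⟨a, b⟩ := q
  rw [List.mem_toFinset, Finset.mem_image, mem_linvp_word]
  constructor
  · rintro ⟨x, y, hxy, ha, hb, hba⟩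
    refine ⟨(σ x, σ y), mem_invF.2 ⟨?_, by simpa⟩, by simp [ha, hb]⟩
    rw [Fin.lt_def, ha, hb]; exact hba
  · rintro ⟨⟨u, v⟩, hq, heq⟩
    rw [mem_invF] at hq
    obtain ⟨h1, h2⟩ := hq
    have ha : (u : ℕ) = a := congrArg Prod.fst heq
    have hb : (v : ℕ) = b := congrArg Prod.snd heq
    refine ⟨σ⁻¹ u, σ⁻¹ v, h2, by rw [Perm.apply_inv_self]; exact ha,
      by rw [Perm.apply_inv_self]; exact hb, by rw [← ha, ← hb]; exact h1⟩

lemma len_eq_linv_word {n : ℕ} (σ : Equiv.Perm (Fin (n+1))) : len σ = linv (word σ) := by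
  rw [len_eq_card_invF, linv]
  rw [← List.toFinset_card_of_nodup (nodup_linvp (word_nodup σ)), linvp_toFinset_eq]
  rw [Finset.card_image_of_injective]
  intro q q' h
  rw [Prod.mk.injEq] at h
  exact Prod.ext (Fin.ext h.1) (Fin.ext h.2)

lemma word_perm {σ π : Equiv.Perm (Fin m)} : word σ ~ word π := by
  apply List.perm_of_nodup_nodup_toFinset_eq (word_nodup σ) (word_nodup π)
  ext a
  rw [List.mem_toFinset, List.mem_toFinset, mem_word, mem_word]

lemma word_injective : Function.Injective (word (m := m)) := by
  intro σ τ h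
  apply Equiv.ext
  intro x
  have hx1 : (x : ℕ) < (word σ).length := by rw [word_length]; exact x.isLt
  have hx2 : (x : ℕ) < (word τ).length := by rw [word_length]; exact x.isLt
  have h1 : (word σ)[(x : ℕ)]? = (word τ)[(x : ℕ)]? := by rw [h]
  rw [List.getElem?_eq_getElem hx1, List.getElem?_eq_getElem hx2] at h1
  have h2 := Option.some.inj h1
  rw [word_getElem, word_getElem] at h2
  apply Fin.ext
  simpa using h2

lemma exists_word_eq {w : List ℕ} (hperm : w ~ word (1 : Equiv.Perm (Fin m))) :
    ∃ σ : Equiv.Perm (Fin m), word σ = w := by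
  have hlen : w.length = m := by rw [hperm.length_eq, word_length]
  have hmem : ∀ (i : ℕ) (hi : i < w.length), w[i] < m := by
    intro i hi
    have h1 : w[i] ∈ w := List.getElem_mem _
    have h2 := hperm.mem_iff.1 h1
    rwa [mem_word] at h2
  have hnd : w.Nodup := hperm.symm.nodup (word_nodup 1)
  set f : Fin m → Fin m := fun i => ⟨w[(i : ℕ)]'(by omega), hmem _ (by omega)⟩ with hf
  have hinj : Function.Injective f := by
    intro i j h
    rw [hf] at h
    simp only [Fin.mk.injEq] at h
    exact Fin.ext ((hnd.getElem_inj_iff).1 h)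
  refine ⟨Equiv.ofBijective f (Finite.injective_iff_bijective.1 hinj), ?_⟩
  apply List.ext_getElem (by rw [word_length, hlen])
  intro i h1 h2
  rw [word_getElem]
  simp only [Equiv.ofBijective_apply, hf]

end RankSymT

open RankSym RankSymP RankSymT

/-- The weak-order interval `[e, π]` below a 132-avoiding permutation is rank-symmetric:
the number of elements of length `r` equals the number of elements of length `ℓ(π) - r`. -/

theorem interval_rank_symmetric {n : ℕ} (π : Equiv.Perm (Fin (n+1)))
    (hπ : ¬ contains132 π) (r : ℕ) :
    {σ : Equiv.Perm (Fin (n+1)) | wle σ π ∧ len σ = r}.ncard =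
      {σ : Equiv.Perm (Fin (n+1)) | wle σ π ∧ len σ + r = len π}.ncard := by
  classical
  have havL : ¬ contains132L (word π) := by
    intro hc
    obtain ⟨x, y, z, hxy, hyz, hsub⟩ := hc
    obtain ⟨i, j, k, hi, hj, hk, hij, hjk, ha, hb, hc'⟩ := triple_sublist_index hsub
    apply hπ
    rw [word_getElem] at ha hb hc'
    refine ⟨⟨i, by rwa [word_length] at hi⟩, ⟨j, by rwa [word_length] at hj⟩,
      ⟨k, by rwa [word_length] at hk⟩, hij, hjk, ?_, ?_⟩
    · rw [Fin.lt_def, ha, hc']; exact hxy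
    · rw [Fin.lt_def, hb, hc']; exact hyz
  have hnodup := word_nodup π
  have hlenπ : len π = linv (word π) := len_eq_linv_word π
  have key : ∀ (Q : ℕ → Prop) (_ : DecidablePred (fun w : List ℕ => Q (linv w))),
      {σ : Equiv.Perm (Fin (n+1)) | wle σ π ∧ Q (len σ)}.ncard
        = ((carrier (word π)).filter (fun w => Q (linv w))).card := by
    intro Q inst
    have himg : word '' {σ : Equiv.Perm (Fin (n+1)) | wle σ π ∧ Q (len σ)}
        = ↑((carrier (word π)).filter (fun w => Q (linv w))) := by
      ext w
      simp only [Set.mem_image, Set.mem_setOf_eq, Finset.coe_filter, Finset.mem_filter]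
      constructor
      · rintro ⟨σ, ⟨hw, hQ⟩, rfl⟩
        refine ⟨mem_carrier.2 ⟨word_perm, wle_iff.1 hw⟩, ?_⟩
        rwa [← len_eq_linv_word]
      · rintro ⟨hc, hQ⟩
        have hperm := (mem_carrier.1 hc).1
        obtain ⟨σ, rfl⟩ := exists_word_eq (hperm.trans (word_perm (σ := π) (π := 1)))
        exact ⟨σ, ⟨wle_iff.2 (mem_carrier.1 hc).2, by rwa [len_eq_linv_word]⟩, rfl⟩
    calc {σ : Equiv.Perm (Fin (n+1)) | wle σ π ∧ Q (len σ)}.ncard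
        = (word '' {σ : Equiv.Perm (Fin (n+1)) | wle σ π ∧ Q (len σ)}).ncard :=
          (Set.ncard_image_of_injective _ word_injective).symm
      _ = (↑((carrier (word π)).filter (fun w => Q (linv w))) : Set (List ℕ)).ncard := by
          rw [himg]
      _ = ((carrier (word π)).filter (fun w => Q (linv w))).card := Set.ncard_coe_finset _
  rw [key (fun t => t = r) (by infer_instance), key (fun t => t + r = len π) (by infer_instance)]
  have hsym := reflect_igf (word π).length (word π) le_rfl hnodup havL
  by_cases hr : r ≤ linv (word π)
  · calc ((carrier (word π)).filter (fun w => linv w = r)).card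
        = (igf (word π)).coeff r := (coeff_igf _ _).symm
      _ = (Polynomial.reflect (linv (word π)) (igf (word π))).coeff r := by rw [hsym]
      _ = (igf (word π)).coeff (Polynomial.revAt (linv (word π)) r) :=
          Polynomial.coeff_reflect _ _ _
      _ = (igf (word π)).coeff (linv (word π) - r) := by rw [Polynomial.revAt_le hr]
      _ = ((carrier (word π)).filter (fun w => linv w = linv (word π) - r)).card :=
          coeff_igf _ _
      _ = ((carrier (word π)).filter (fun w => linv w + r = len π)).card := by
          apply congrArg Finset.card
          apply Finset.filter_congr
          intro w hw
          have hle := linv_le_of_mem_carrier hnodup hw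
          rw [hlenπ]
          constructor <;> (intro h; omega)
  · rw [Finset.filter_false_of_mem, Finset.filter_false_of_mem]
    · intro w hw
      have hle := linv_le_of_mem_carrier hnodup hw
      rw [hlenπ]
      omega
    · intro w hw
      have hle := linv_le_of_mem_carrier hnodup hw
      omega
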